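/- arXiv:2604.02758 — 6 statements merged into one kernel-verified Lean document; each statement's English description precedes it below -/
import Mathlib

section
/- inf_{β > 0} [ (1+β) − (β+β²)·ln(1 + 1/β) ] = 1/2, and the infimum is not attained by any β > 0. -/
open Real Set

private lemma hd1 (t : ℝ) (ht : 0 < 1 + t) :
    HasDerivAt (fun s : ℝ => (1 + s) * Real.log (1 + s)) (Real.log (1 + t) + 1) t := by
  have h1 : HasDerivAt (fun s : ℝ => 1 + s) 1 t := (hasDerivAt_id t).const_add 1
  have h2 : HasDerivAt (fun s : ℝ => Real.log (1 + s)) (1 / (1 + t)) t := by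
    simpa using h1.log ht.ne'
  have h3 := h1.mul h2
  refine h3.congr_deriv ?_
  field_simp [ht.ne']

private lemma log_cont (s : Set ℝ) (hs : ∀ x ∈ s, (0:ℝ) ≤ x) :
    ContinuousOn (fun x : ℝ => (1 + x) * Real.log (1 + x)) s := by
  apply ContinuousOn.mul (by fun_prop)
  apply ContinuousOn.log (by fun_prop)
  intro x hx
  have := hs x hx
  positivity

private lemma G_pos {t : ℝ} (ht : 0 < t) :
    (1 + t) * Real.log (1 + t) < t ^ 2 / 2 + t := by
  set g : ℝ → ℝ := fun s => s ^ 2 / 2 + s - (1 + s) * Real.log (1 + s) with hg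
  have hderiv : ∀ s ∈ interior (Ici (0:ℝ)), 0 < deriv g s := by
    intro s hs
    rw [interior_Ici] at hs
    have hs' : (0:ℝ) < s := hs
    have h1 : HasDerivAt g (s - Real.log (1 + s)) s := by
      have := (((hasDerivAt_pow 2 s).div_const 2).add (hasDerivAt_id s)).sub
        (hd1 s (by linarith))
      refine this.congr_deriv ?_
      norm_num
    rw [h1.deriv]
    have := Real.log_lt_sub_one_of_pos (x := 1 + s) (by linarith) (by linarith)
    linarith
  have hcont : ContinuousOn g (Ici 0) := by
    apply ContinuousOn.sub (by fun_prop)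
    exact log_cont _ (fun x hx => hx)
  have hmono := strictMonoOn_of_deriv_pos (convex_Ici 0) hcont hderiv
  have h0 := hmono (self_mem_Ici) (le_of_lt ht : (0:ℝ) ≤ t) ht
  have : g 0 = 0 := by simp [hg]
  rw [this] at h0
  simp only [hg] at h0
  linarith

private lemma H_pos {t : ℝ} (ht : 0 < t) :
    t + t ^ 2 / 2 - t ^ 3 / 2 < (1 + t) * Real.log (1 + t) := by
  set g : ℝ → ℝ := fun s => (1 + s) * Real.log (1 + s) - s - s ^ 2 / 2 + s ^ 3 / 2 with hg
  have hderiv : ∀ s ∈ interior (Ici (0:ℝ)), 0 < deriv g s := by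
    intro s hs
    rw [interior_Ici] at hs
    have hs' : (0:ℝ) < s := hs
    have h1 : HasDerivAt g (Real.log (1 + s) - s + 3 / 2 * s ^ 2) s := by
      have := (((hd1 s (by linarith)).sub (hasDerivAt_id s)).sub
        ((hasDerivAt_pow 2 s).div_const 2)).add ((hasDerivAt_pow 3 s).div_const 2)
      refine this.congr_deriv ?_
      norm_num
      ring
    rw [h1.deriv]
    have hpos : (0:ℝ) < 1 + s := by linarith
    have hlog : 1 - (1 + s)⁻¹ ≤ Real.log (1 + s) := Real.one_sub_inv_le_log_of_pos hpos
    have hinv : 1 - (1 + s)⁻¹ = s / (1 + s) := by field_simp; ring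
    rw [hinv] at hlog
    have key : 0 < s / (1 + s) - s + 3 / 2 * s ^ 2 := by
      have heq : s / (1 + s) - s + 3 / 2 * s ^ 2 = (s ^ 2 / 2 + 3 / 2 * s ^ 3) / (1 + s) := by
        field_simp; ring
      rw [heq]
      exact div_pos (by positivity) hpos
    linarith
  have hcont : ContinuousOn g (Ici 0) := by
    apply ContinuousOn.add
    apply ContinuousOn.sub
    apply ContinuousOn.sub
    exact log_cont _ (fun x hx => hx)
    all_goals fun_prop
  have hmono := strictMonoOn_of_deriv_pos (convex_Ici 0) hcont hderiv
  have h0 := hmono (self_mem_Ici) (le_of_lt ht : (0:ℝ) ≤ t) ht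
  have : g 0 = 0 := by simp [hg]
  rw [this] at h0
  simp only [hg] at h0
  linarith

private lemma claim1 {β : ℝ} (hβ : 0 < β) :
    1 / 2 < (1 + β) - (β + β ^ 2) * Real.log (1 + 1 / β) := by
  have ht : (0:ℝ) < 1 / β := by positivity
  have h := G_pos ht
  set L := Real.log (1 + 1 / β) with hL
  have hβ' : β ≠ 0 := hβ.ne'
  have h2 := mul_lt_mul_of_pos_left h (show (0:ℝ) < β ^ 2 by positivity)
  have e1 : β ^ 2 * ((1 + 1 / β) * L) = (β ^ 2 + β) * L := by field_simp
  have e2 : β ^ 2 * ((1 / β) ^ 2 / 2 + 1 / β) = 1 / 2 + β := by field_simp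
  rw [e1, e2] at h2
  linarith

private lemma claim2 {β : ℝ} (hβ : 0 < β) :
    (1 + β) - (β + β ^ 2) * Real.log (1 + 1 / β) < 1 / 2 + 1 / (2 * β) := by
  have ht : (0:ℝ) < 1 / β := by positivity
  have h := H_pos ht
  set L := Real.log (1 + 1 / β) with hL
  have hβ' : β ≠ 0 := hβ.ne'
  have h2 := mul_lt_mul_of_pos_left h (show (0:ℝ) < β ^ 2 by positivity)
  have e1 : β ^ 2 * ((1 + 1 / β) * L) = (β ^ 2 + β) * L := by field_simp
  have e2 : β ^ 2 * (1 / β + (1 / β) ^ 2 / 2 - (1 / β) ^ 3 / 2) = β + 1 / 2 - 1 / (2 * β) := by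
    field_simp
  rw [e1, e2] at h2
  linarith

theorem Rstar_one_eq_half :
    IsGLB ((fun β : ℝ => (1 + β) - (β + β ^ 2) * Real.log (1 + 1 / β)) '' Set.Ioi 0)
      (1 / 2) ∧
    ∀ β : ℝ, 0 < β →
      (1 + β) - (β + β ^ 2) * Real.log (1 + 1 / β) ≠ 1 / 2 := by
  constructor
  · constructor
    · rintro x ⟨β, hβ, rfl⟩
      exact (claim1 (Set.mem_Ioi.mp hβ)).le
    · intro b hb
      by_contra hb'
      push_neg at hb'
      set β : ℝ := 1 / (b - 1 / 2) with hβdef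
      have hb2 : 0 < b - 1 / 2 := by linarith
      have hβ : 0 < β := by positivity
      have h1 : b ≤ (1 + β) - (β + β ^ 2) * Real.log (1 + 1 / β) :=
        hb ⟨β, Set.mem_Ioi.mpr hβ, rfl⟩
      have h2 := claim2 hβ
      have h3 : 1 / (2 * β) = (b - 1 / 2) / 2 := by
        rw [hβdef]; field_simp
      rw [h3] at h2
      linarith
  · intro β hβ
    exact (claim1 hβ).ne'
end

section
/- For every C ∈ (0,1], R*(C) := inf_{β>0} [(1+β) − C(β+β²)·ln(1 + 1/β)] satisfies R*(C) > 1 − C. -/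
private lemma g_hasDerivAt (x : ℝ) (hx : 0 < x) :
    HasDerivAt (fun x : ℝ => x * (2 + x) / (2 * (1 + x)) - Real.log (1 + x))
      (x ^ 2 / (2 * (1 + x) ^ 2)) x := by
  have h1x : (0 : ℝ) < 1 + x := by linarith
  have hne : (2 * (1 + x)) ≠ 0 := by positivity
  have hn : HasDerivAt (fun x : ℝ => x * (2 + x)) (1 * (2 + x) + x * (0 + 1)) x :=
    (hasDerivAt_id x).mul ((hasDerivAt_const x 2).add (hasDerivAt_id x))
  have hd : HasDerivAt (fun x : ℝ => 2 * (1 + x)) (2 * (0 + 1)) x :=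
    ((hasDerivAt_const x 1).add (hasDerivAt_id x)).const_mul 2
  have hq := hn.div hd hne
  have hl : HasDerivAt (fun x : ℝ => Real.log (1 + x)) ((0 + 1) / (1 + x)) x :=
    (((hasDerivAt_const x 1).add (hasDerivAt_id x))).log (ne_of_gt h1x)
  have := hq.sub hl
  refine this.congr_deriv ?_
  field_simp
  ring

private lemma log_le_key (x : ℝ) (hx : 0 ≤ x) :
    Real.log (1 + x) ≤ x * (2 + x) / (2 * (1 + x)) := by
  set g : ℝ → ℝ := fun x => x * (2 + x) / (2 * (1 + x)) - Real.log (1 + x) with hg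
  have hmono : MonotoneOn g (Set.Ici (0 : ℝ)) := by
    apply monotoneOn_of_deriv_nonneg (convex_Ici 0)
    · apply ContinuousOn.sub
      · apply ContinuousOn.div
        · fun_prop
        · fun_prop
        · intro y hy
          have : (0:ℝ) ≤ y := hy
          positivity
      · apply ContinuousOn.log
        · fun_prop
        · intro y hy
          have : (0:ℝ) ≤ y := hy
          positivity
    · intro y hy
      rw [interior_Ici] at hy
      exact (g_hasDerivAt y hy).differentiableAt.differentiableWithinAt
    · intro y hy
      rw [interior_Ici] at hy
      rw [(g_hasDerivAt y hy).deriv]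
      positivity
  have h0 : g 0 = 0 := by simp [hg]
  have := hmono (Set.self_mem_Ici) (Set.mem_Ici.mpr hx) hx
  rw [h0] at this
  simpa [hg, sub_nonneg] using this

private lemma beta_bound (C β : ℝ) (hC0 : 0 < C) (hβ : 0 < β) :
    C * (β + β ^ 2) * Real.log (1 + 1 / β) ≤ C * (β + 1 / 2) := by
  have hx : (0:ℝ) ≤ 1 / β := by positivity
  have h := log_le_key (1 / β) hx
  have hA : (0:ℝ) ≤ β + β ^ 2 := by positivity
  have h2 : (β + β ^ 2) * Real.log (1 + 1 / β) ≤ β + 1 / 2 := by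
    have := mul_le_mul_of_nonneg_left h hA
    calc (β + β ^ 2) * Real.log (1 + 1 / β)
        ≤ (β + β ^ 2) * ((1 / β) * (2 + 1 / β) / (2 * (1 + 1 / β))) := this
      _ = β + 1 / 2 := by field_simp; ring
  calc C * (β + β ^ 2) * Real.log (1 + 1 / β)
      = C * ((β + β ^ 2) * Real.log (1 + 1 / β)) := by ring
    _ ≤ C * (β + 1 / 2) := by
        exact mul_le_mul_of_nonneg_left h2 (le_of_lt hC0)

theorem Rstar_beats_public (C : ℝ) (hC : C ∈ Set.Ioc (0 : ℝ) 1) :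
    sInf ((fun β : ℝ => (1 + β) - C * (β + β ^ 2) * Real.log (1 + 1 / β)) '' Set.Ioi 0)
      > 1 - C := by
  obtain ⟨hC0, hC1⟩ := hC
  have hlb : ∀ y ∈ (fun β : ℝ => (1 + β) - C * (β + β ^ 2) * Real.log (1 + 1 / β)) '' Set.Ioi 0,
      1 - C / 2 ≤ y := by
    rintro y ⟨β, hβ, rfl⟩
    have hβ0 : (0:ℝ) < β := hβ
    have h := beta_bound C β hC0 hβ0
    have : (1 - C) * β ≥ 0 := mul_nonneg (by linarith) (le_of_lt hβ0)
    simp only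
    nlinarith
  have hne : ((fun β : ℝ => (1 + β) - C * (β + β ^ 2) * Real.log (1 + 1 / β)) '' Set.Ioi 0).Nonempty :=
    ⟨_, ⟨1, by norm_num, rfl⟩⟩
  have := le_csInf hne hlb
  linarith
end

section
/- There exists C ∈ (1/2, 1) such that R*(C) = C, where R*(C) = inf_{β>0} [(1+β) − C(β+β²)·ln(1+1/β)]. -/
open Real Set

noncomputable def Rstar (C : ℝ) : ℝ :=
  sInf ((fun β : ℝ => (1 + β) - C * (β + β ^ 2) * Real.log (1 + 1 / β)) '' Set.Ioi 0)

namespace RstarAux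

noncomputable def g (C β : ℝ) : ℝ := (1 + β) - C * (β + β ^ 2) * Real.log (1 + 1 / β)

lemma Rstar_eq (C : ℝ) : Rstar C = sInf (g C '' Ioi 0) := rfl

lemma log_nonneg' {β : ℝ} (hβ : 0 < β) : 0 ≤ Real.log (1 + 1 / β) := by
  have : (0:ℝ) < 1/β := by positivity
  exact Real.log_nonneg (by linarith)

lemma log_le' {β : ℝ} (hβ : 0 < β) : Real.log (1 + 1 / β) ≤ 1 / β := by
  have := Real.log_le_sub_one_of_pos (x := 1 + 1/β) (by positivity)
  linarith

lemma coeff_nonneg {β : ℝ} (hβ : 0 < β) : 0 ≤ (β + β ^ 2) * Real.log (1 + 1 / β) := by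
  have := log_nonneg' hβ; nlinarith

lemma coeff_le {β : ℝ} (hβ : 0 < β) : (β + β ^ 2) * Real.log (1 + 1 / β) ≤ 1 + β := by
  have h := log_le' hβ
  have h2 : (β + β^2) * Real.log (1+1/β) ≤ (β + β^2) * (1/β) :=
    mul_le_mul_of_nonneg_left h (by nlinarith)
  have h3 : (β + β^2) * (1/β) = 1 + β := by field_simp
  linarith

lemma g_lb {C β : ℝ} (hC0 : 0 ≤ C) (hC1 : C ≤ 1) (hβ : 0 < β) :
    (1 - C) * (1 + β) ≤ g C β := by
  have h1 := coeff_le hβ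
  have h2 : C * ((β + β^2) * Real.log (1+1/β)) ≤ C * (1+β) :=
    mul_le_mul_of_nonneg_left h1 hC0
  unfold g; nlinarith

lemma nonempty' (C : ℝ) : (g C '' Ioi 0).Nonempty :=
  ⟨g C 1, 1, by norm_num, rfl⟩

lemma bdd {C : ℝ} (hC0 : 0 ≤ C) (hC1 : C ≤ 1) : BddBelow (g C '' Ioi 0) := by
  refine ⟨0, ?_⟩
  rintro x ⟨β, hβ, rfl⟩
  have h := g_lb hC0 hC1 (mem_Ioi.mp hβ)
  have hβ' : (0:ℝ) < β := hβ
  nlinarith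

lemma Rstar_le_g {C β : ℝ} (hC0 : 0 ≤ C) (hC1 : C ≤ 1) (hβ : 0 < β) :
    Rstar C ≤ g C β := by
  rw [Rstar_eq]
  exact csInf_le (bdd hC0 hC1) ⟨β, hβ, rfl⟩

lemma log_le_div_e {x : ℝ} (hx : 0 < x) : Real.log x ≤ x / Real.exp 1 := by
  have h := Real.log_le_sub_one_of_pos (x := x / Real.exp 1) (by positivity)
  rw [Real.log_div (ne_of_gt hx) (by positivity), Real.log_exp] at h
  linarith

lemma lower_A {β : ℝ} (hβ : 0 < β) : (3/5 : ℝ) ≤ g (3/5) β := by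
  rcases le_or_gt (1/2 : ℝ) β with h | h
  · have := g_lb (C := 3/5) (by norm_num) (by norm_num) hβ
    have : (2/5 : ℝ) * (1 + β) ≤ g (3/5) β := by linarith [this]
    nlinarith
  · -- β < 1/2 : use log(1+1/β) ≤ (1+1/β)/e ≤ (1+1/β)*(10/27)
    have hx : (0:ℝ) < 1 + 1/β := by positivity
    have h1 : Real.log (1 + 1/β) ≤ (1 + 1/β) / Real.exp 1 := log_le_div_e hx
    have he : (27/10 : ℝ) ≤ Real.exp 1 := by
      have := Real.exp_one_gt_d9; linarith
    have h2 : (1 + 1/β) / Real.exp 1 ≤ (1 + 1/β) * (10/27) := by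
      rw [div_le_iff₀ (by positivity)]
      nlinarith
    have hL : Real.log (1 + 1/β) ≤ (1 + 1/β) * (10/27) := le_trans h1 h2
    have h3 : (β + β^2) * Real.log (1+1/β) ≤ (β + β^2) * ((1 + 1/β) * (10/27)) :=
      mul_le_mul_of_nonneg_left hL (by nlinarith)
    have h4 : (β + β^2) * ((1 + 1/β) * (10/27)) = (10/27) * (1+β)^2 := by
      field_simp; ring
    unfold g
    nlinarith [h3, h4]

lemma lower_A' : (3/5 : ℝ) ≤ Rstar (3/5) := by
  rw [Rstar_eq]
  apply le_csInf (nonempty' _)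
  rintro x ⟨β, hβ, rfl⟩
  exact lower_A hβ

lemma upper_B : Rstar (9/10 : ℝ) ≤ 9/10 := by
  have h := Rstar_le_g (C := 9/10) (β := 1) (by norm_num) (by norm_num) one_pos
  have hg : g (9/10) 1 = 2 - (9/5) * Real.log 2 := by
    unfold g; norm_num
  have hlog := Real.log_two_gt_d9
  rw [hg] at h
  linarith

lemma anti {C1 C2 : ℝ} (h0 : 0 ≤ C1) (h : C1 ≤ C2) (h1 : C2 ≤ 1) :
    Rstar C2 ≤ Rstar C1 := by
  rw [Rstar_eq C1]
  apply le_csInf (nonempty' _)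
  rintro x ⟨β, hβ, rfl⟩
  have hβ' : (0:ℝ) < β := hβ
  have hc := coeff_nonneg hβ'
  have hmono : g C2 β ≤ g C1 β := by
    unfold g
    nlinarith [mul_le_mul_of_nonneg_right h hc]
  exact le_trans (Rstar_le_g (le_trans h0 h) h1 hβ') hmono

lemma lip {C1 C2 : ℝ} (hC1 : C1 ∈ Icc (3/5:ℝ) (9/10)) (hC2 : C2 ∈ Icc (3/5:ℝ) (9/10))
    (h : C1 ≤ C2) : Rstar C1 ≤ Rstar C2 + 13 * (C2 - C1) := by
  apply le_of_forall_pos_le_add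
  intro ε hε
  set δ := min ε (1/10) with hδdef
  have hδ0 : 0 < δ := lt_min hε (by norm_num)
  have hδ1 : δ ≤ 1/10 := min_le_right _ _
  have hδ2 : δ ≤ ε := min_le_left _ _
  have hC10 : (0:ℝ) ≤ C1 := by linarith [hC1.1]
  have hC21 : C2 ≤ 1 := by linarith [hC2.2]
  have h2 : Rstar C2 < Rstar C2 + δ := by linarith
  rw [Rstar_eq C2] at h2
  obtain ⟨x, ⟨β, hβ, rfl⟩, hx⟩ := exists_lt_of_csInf_lt (nonempty' _) h2
  rw [← Rstar_eq C2] at hx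
  have hβ' : (0:ℝ) < β := hβ
  have hlog := Real.log_two_gt_d9
  have hR2 : Rstar C2 ≤ 2 - (6/5) * Real.log 2 := by
    have hh := Rstar_le_g (C := C2) (β := 1) (by linarith [hC2.1]) hC21 one_pos
    have hg : g C2 1 = 2 - 2 * C2 * Real.log 2 := by
      unfold g; norm_num; ring
    rw [hg] at hh
    nlinarith [hC2.1, Real.log_pos (by norm_num : (1:ℝ) < 2)]
  have hgsmall : g C2 β < 13/10 := by
    have : Rstar C2 + δ ≤ (2 - (6/5) * Real.log 2) + 1/10 := by linarith
    linarith
  have hβle : β ≤ 12 := by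
    have hlb := g_lb (C := C2) (by linarith [hC2.1]) hC21 hβ'
    have h110 : (1/10 : ℝ) ≤ 1 - C2 := by linarith [hC2.2]
    nlinarith
  have hcoeff := coeff_le hβ'
  have hcnn := coeff_nonneg hβ'
  have hstep : g C1 β ≤ g C2 β + 13 * (C2 - C1) := by
    unfold g
    nlinarith [mul_le_mul_of_nonneg_right (sub_nonneg.mpr h) hcnn,
      mul_le_mul_of_nonneg_left hcoeff (sub_nonneg.mpr h)]
  have hR1 : Rstar C1 ≤ g C1 β := Rstar_le_g hC10 (by linarith [hC1.2]) hβ'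
  linarith

lemma cont : ContinuousOn Rstar (Icc (3/5:ℝ) (9/10)) := by
  have hlip : LipschitzOnWith 13 Rstar (Icc (3/5:ℝ) (9/10)) := by
    apply LipschitzOnWith.of_dist_le_mul
    intro x hx y hy
    have hco : ((13 : NNReal) : ℝ) = 13 := by norm_num
    rw [Real.dist_eq, Real.dist_eq, hco]
    rcases le_total x y with h | h
    · have h1 := lip hx hy h
      have h2 := anti (by linarith [hx.1] : (0:ℝ) ≤ x) h (by linarith [hy.2] : y ≤ 1)
      rw [abs_of_nonpos (by linarith : x - y ≤ 0)]
      rw [abs_of_nonneg (by linarith : 0 ≤ Rstar x - Rstar y)]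
      linarith
    · have h1 := lip hy hx h
      have h2 := anti (by linarith [hy.1] : (0:ℝ) ≤ y) h (by linarith [hx.2] : x ≤ 1)
      rw [abs_of_nonneg (by linarith : 0 ≤ x - y)]
      rw [abs_of_nonpos (by linarith : Rstar x - Rstar y ≤ 0)]
      linarith
  exact hlip.continuousOn

end RstarAux

theorem Rstar_fixed_point :
    ∃ C : ℝ, C ∈ Set.Ioo (1 / 2 : ℝ) 1 ∧ Rstar C = C := by
  have hcont : ContinuousOn (fun C => Rstar C - C) (Icc (3/5:ℝ) (9/10)) :=
    RstarAux.cont.sub continuousOn_id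
  have h0 : (0:ℝ) ∈ Icc ((fun C => Rstar C - C) (9/10)) ((fun C => Rstar C - C) (3/5)) := by
    constructor
    · simp only
      linarith [RstarAux.upper_B]
    · simp only
      linarith [RstarAux.lower_A']
  obtain ⟨c, hc, hfc⟩ := intermediate_value_Icc' (by norm_num : (3/5:ℝ) ≤ 9/10) hcont h0
  refine ⟨c, ⟨by linarith [hc.1], lt_of_le_of_lt hc.2 (by norm_num)⟩, ?_⟩
  have : Rstar c - c = 0 := hfc
  linarith
end

section
/- For all T > 0, β > 0, C ∈ [0,1], and v_L ≥ T, the quantity (1−C)·β·[T + ∫_T^{v_L} (T/v) dv + ∫_{v_L}^{v_L+T/β} (T − β(v − v_L))/v dv] + ∫_T^{v_L} (T/v²)(T + β(v_L − v)) dv + ∫_{v_L}^{v_L+T/β} ((T + βv_L)/v²)(T − β(v − v_L)) dv equals T + βv_L − Cβ·[T·ln(v_L/T) + (T + βv_L)·ln(1 + T/(βv_L))]. -/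
open intervalIntegral Real

lemma key_int (a b c d e : ℝ) (ha : 0 < a) (hab : a ≤ b) :
    ∫ v in a..b, (c / v + d / v ^ 2 + e) =
      c * Real.log (b / a) + d * (1 / a - 1 / b) + e * (b - a) := by
  have h0 : (0 : ℝ) ∉ Set.uIcc a b := by
    rw [Set.uIcc_of_le hab]
    rintro ⟨h1, _⟩; linarith
  have hne : ∀ x ∈ Set.uIcc a b, x ≠ 0 := by
    intro x hx hx0; exact h0 (hx0 ▸ hx)
  have hc : IntervalIntegrable (fun v => c / v) MeasureTheory.volume a b := by
    apply ContinuousOn.intervalIntegrable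
    exact ContinuousOn.div continuousOn_const (by fun_prop) hne
  have hd : IntervalIntegrable (fun v => d / v ^ 2) MeasureTheory.volume a b := by
    apply ContinuousOn.intervalIntegrable
    apply ContinuousOn.div continuousOn_const (by fun_prop)
    intro x hx
    exact pow_ne_zero 2 (hne x hx)
  have he : IntervalIntegrable (fun _ : ℝ => e) MeasureTheory.volume a b :=
    intervalIntegrable_const
  rw [integral_add (hc.add hd) he, integral_add hc hd]
  have h1 : ∫ v in a..b, c / v = c * Real.log (b / a) := by
    have : ∀ v : ℝ, c / v = c * (1 / v) := by intro v; ring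
    simp_rw [this]
    rw [integral_const_mul, integral_one_div h0]
  have h2 : ∫ v in a..b, d / v ^ 2 = d * (1 / a - 1 / b) := by
    have : ∀ v : ℝ, d / v ^ 2 = d * (v : ℝ) ^ (-2 : ℤ) := by
      intro v; rw [zpow_neg, zpow_two]; ring
    simp_rw [this]
    rw [integral_const_mul, integral_zpow (Or.inr ⟨by norm_num, h0⟩)]
    have hb : b ≠ 0 := hne b Set.right_mem_uIcc
    have ha' : a ≠ 0 := hne a Set.left_mem_uIcc
    norm_num
    left
    field_simp
    ring
  rw [h1, h2, integral_const, smul_eq_mul]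
  ring

theorem dual_objective_evaluation (T β C vL : ℝ) (hT : 0 < T) (hβ : 0 < β)
    (hC : C ∈ Set.Icc (0 : ℝ) 1) (hvL : T ≤ vL) :
    (1 - C) * β *
        (T + (∫ v in T..vL, T / v) +
          ∫ v in vL..(vL + T / β), (T - β * (v - vL)) / v) +
      (∫ v in T..vL, (T / v ^ 2) * (T + β * (vL - v))) +
      (∫ v in vL..(vL + T / β), ((T + β * vL) / v ^ 2) * (T - β * (v - vL)))
    = T + β * vL -
        C * β * (T * Real.log (vL / T) + (T + β * vL) * Real.log (1 + T / (β * vL))) := by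
  have hvL0 : 0 < vL := lt_of_lt_of_le hT hvL
  have hTβ : 0 < T / β := div_pos hT hβ
  have hle2 : vL ≤ vL + T / β := by linarith
  have hnz : ∀ {x : ℝ}, 0 < x → x ≠ 0 := fun h => ne_of_gt h
  -- Rewrite each integral to key form
  have e1 : (∫ v in T..vL, T / v) = ∫ v in T..vL, (T / v + 0 / v ^ 2 + 0) := by
    apply integral_congr; intro v _; simp
  have e2 : (∫ v in vL..(vL + T / β), (T - β * (v - vL)) / v)
      = ∫ v in vL..(vL + T / β), ((T + β * vL) / v + 0 / v ^ 2 + (-β)) := by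
    apply integral_congr
    intro v hv
    rw [Set.uIcc_of_le hle2] at hv
    have hv0 : v ≠ 0 := ne_of_gt (lt_of_lt_of_le hvL0 hv.1)
    field_simp
    ring
  have e3 : (∫ v in T..vL, (T / v ^ 2) * (T + β * (vL - v)))
      = ∫ v in T..vL, ((-(T * β)) / v + (T * (T + β * vL)) / v ^ 2 + 0) := by
    apply integral_congr
    intro v hv
    rw [Set.uIcc_of_le hvL] at hv
    have hv0 : v ≠ 0 := ne_of_gt (lt_of_lt_of_le hT hv.1)
    field_simp
    ring
  have e4 : (∫ v in vL..(vL + T / β), ((T + β * vL) / v ^ 2) * (T - β * (v - vL)))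
      = ∫ v in vL..(vL + T / β),
          ((-(β * (T + β * vL))) / v + ((T + β * vL) ^ 2) / v ^ 2 + 0) := by
    apply integral_congr
    intro v hv
    rw [Set.uIcc_of_le hle2] at hv
    have hv0 : v ≠ 0 := ne_of_gt (lt_of_lt_of_le hvL0 hv.1)
    field_simp
    ring
  rw [e1, e2, e3, e4,
    key_int T vL T 0 0 hT hvL,
    key_int vL (vL + T / β) (T + β * vL) 0 (-β) hvL0 hle2,
    key_int T vL (-(T * β)) (T * (T + β * vL)) 0 hT hvL,
    key_int vL (vL + T / β) (-(β * (T + β * vL))) ((T + β * vL) ^ 2) 0 hvL0 hle2]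
  have hlog : (vL + T / β) / vL = 1 + T / (β * vL) := by
    field_simp
  rw [hlog]
  have hβvL : (T + β * vL) ≠ 0 := by positivity
  have h4 : 1 / vL - 1 / (vL + T / β) = T / (vL * (T + β * vL)) := by
    rw [div_sub_div _ _ (hnz hvL0) (by positivity)]
    rw [div_eq_div_iff (by positivity) (by positivity)]
    field_simp
    ring
  rw [h4]
  field_simp
  ring
end

section
/- For fixed T > 0, β > 0, C ∈ (0,1], the function h(v_L) = T + βv_L − Cβ·[T·ln(v_L/T) + (T + βv_L)·ln(1 + T/(βv_L))] is convex on (0,∞), and its restriction to [T, ∞) attains its minimum at v_L = T, where h(T) = T(1+β) − C·T(β+β²)·ln(1 + 1/β). -/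
open Real Set

theorem dual_objective_convex_min (T β C : ℝ) (hT : 0 < T) (hβ : 0 < β)
    (hC : C ∈ Set.Ioc (0 : ℝ) 1) :
    let h : ℝ → ℝ := fun vL =>
      T + β * vL -
        C * β * (T * Real.log (vL / T) + (T + β * vL) * Real.log (1 + T / (β * vL)))
    ConvexOn ℝ (Set.Ioi (0 : ℝ)) h ∧
    (∀ vL : ℝ, T ≤ vL → h T ≤ h vL) ∧
    h T = T * (1 + β) - C * T * (β + β ^ 2) * Real.log (1 + 1 / β) := by
  intro h
  obtain ⟨hC0, hC1⟩ := hC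
  set H : ℝ → ℝ := fun v =>
    T + C * β * T * (Real.log T + Real.log β) + β * v
      + C * β ^ 2 * (v * Real.log (β * v)) - C * β * ((T + β * v) * Real.log (T + β * v))
    with hH
  -- h = H on Ioi 0
  have hEq : ∀ v : ℝ, 0 < v → h v = H v := by
    intro v hv
    have hβv : 0 < β * v := by positivity
    have hTβv : 0 < T + β * v := by positivity
    have e1 : (1 : ℝ) + T / (β * v) = (T + β * v) / (β * v) := by field_simp; ring
    simp only [h, H, e1, Real.log_div hv.ne' hT.ne', Real.log_div hTβv.ne' hβv.ne',
      Real.log_mul hβ.ne' hv.ne']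
    ring
  -- derivative facts
  have hd1 : ∀ v : ℝ, 0 < v →
      HasDerivAt H (β + C * β ^ 2 * (Real.log (β * v) - Real.log (T + β * v))) v := by
    intro v hv
    have hβv : (0:ℝ) < β * v := by positivity
    have hTβv : (0:ℝ) < T + β * v := by positivity
    have l1 : HasDerivAt (fun v : ℝ => β * v) β v := by
      simpa using (hasDerivAt_id v).const_mul β
    have l2 : HasDerivAt (fun v : ℝ => Real.log (β * v)) (β / (β * v)) v := l1.log hβv.ne'
    have l3 : HasDerivAt (fun v : ℝ => v * Real.log (β * v))
        (1 * Real.log (β * v) + v * (β / (β * v))) v := (hasDerivAt_id v).mul l2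
    have l4 : HasDerivAt (fun v : ℝ => T + β * v) β v := l1.const_add T
    have l5 : HasDerivAt (fun v : ℝ => Real.log (T + β * v)) (β / (T + β * v)) v :=
      l4.log hTβv.ne'
    have l6 : HasDerivAt (fun v : ℝ => (T + β * v) * Real.log (T + β * v))
        (β * Real.log (T + β * v) + (T + β * v) * (β / (T + β * v))) v := l4.mul l5
    have := (((hasDerivAt_const v (T + C * β * T * (Real.log T + Real.log β))).add l1).add
      (l3.const_mul (C * β ^ 2))).sub (l6.const_mul (C * β))
    refine this.congr_deriv ?_
    rw [show v * (β / (β * v)) = 1 by rw [← div_div, div_self hβ.ne', mul_one_div_cancel hv.ne'],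
      show (T + β * v) * (β / (T + β * v)) = β by rw [mul_comm, div_mul_cancel₀ β hTβv.ne']]
    ring
  have hderiv : ∀ v : ℝ, 0 < v →
      deriv H v = β + C * β ^ 2 * (Real.log (β * v) - Real.log (T + β * v)) := by
    intro v hv; exact (hd1 v hv).deriv
  -- convexity of H on Ioi 0
  have hdiff : DifferentiableOn ℝ H (Set.Ioi (0:ℝ)) := fun v hv =>
    (hd1 v hv).differentiableAt.differentiableWithinAt
  have hd2 : ∀ v : ℝ, 0 < v →
      HasDerivAt (fun v => β + C * β ^ 2 * (Real.log (β * v) - Real.log (T + β * v)))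
        (C * β ^ 2 * (β / (β * v) - β / (T + β * v))) v := by
    intro v hv
    have hβv : (0:ℝ) < β * v := by positivity
    have hTβv : (0:ℝ) < T + β * v := by positivity
    have l1 : HasDerivAt (fun v : ℝ => β * v) β v := by
      simpa using (hasDerivAt_id v).const_mul β
    have l2 := l1.log hβv.ne'
    have l5 := (l1.const_add T).log hTβv.ne'
    exact (((l2.sub l5).const_mul (C * β ^ 2)).const_add β)
  have hderiv2 : ∀ v : ℝ, 0 < v →
      deriv (deriv H) v = C * β ^ 2 * (β / (β * v) - β / (T + β * v)) := by
    intro v hv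
    have hev : deriv H =ᶠ[nhds v]
        (fun v => β + C * β ^ 2 * (Real.log (β * v) - Real.log (T + β * v))) := by
      filter_upwards [isOpen_Ioi.mem_nhds (show v ∈ Set.Ioi (0:ℝ) from hv)] with w hw
      exact hderiv w hw
    rw [hev.deriv_eq]
    exact (hd2 v hv).deriv
  have hconvH : ConvexOn ℝ (Set.Ioi (0:ℝ)) H := by
    apply convexOn_of_deriv2_nonneg (convex_Ioi 0)
      (hdiff.continuousOn)
    · rwa [interior_Ioi]
    · rw [interior_Ioi]
      intro v hv
      have hev : deriv H =ᶠ[nhds v]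
          (fun v => β + C * β ^ 2 * (Real.log (β * v) - Real.log (T + β * v))) := by
        filter_upwards [isOpen_Ioi.mem_nhds (show v ∈ Set.Ioi (0:ℝ) from hv)] with w hw
        exact hderiv w hw
      exact (hev.differentiableAt_iff.mpr (hd2 v hv).differentiableAt).differentiableWithinAt
    · rw [interior_Ioi]
      intro v hv
      have : deriv^[2] H v = deriv (deriv H) v := by
        simp [Function.iterate_succ, Function.iterate_one]
      rw [this, hderiv2 v hv]
      have hv' : (0:ℝ) < v := hv
      have hβv : (0:ℝ) < β * v := by positivity
      have hTβv : (0:ℝ) < T + β * v := by positivity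
      have : β / (T + β * v) ≤ β / (β * v) := by
        apply div_le_div_of_nonneg_left hβ.le hβv
        linarith
      have h2 : 0 ≤ β / (β * v) - β / (T + β * v) := by linarith
      positivity
  have hconv : ConvexOn ℝ (Set.Ioi (0:ℝ)) h := by
    refine ⟨convex_Ioi 0, fun x hx y hy a b ha hb hab => ?_⟩
    have hmem : a • x + b • y ∈ Set.Ioi (0:ℝ) := (convex_Ioi 0) hx hy ha hb hab
    rw [hEq _ hmem, hEq _ hx, hEq _ hy]
    exact hconvH.2 hx hy ha hb hab
  refine ⟨hconv, ?_, ?_⟩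
  · -- monotone on Ici T
    have hmono : MonotoneOn H (Set.Ici T) := by
      apply monotoneOn_of_deriv_nonneg (convex_Ici T)
      · exact (hdiff.mono (fun v hv => lt_of_lt_of_le hT hv)).continuousOn
      · rw [interior_Ici]
        exact fun v hv => (hd1 v (hT.trans hv)).differentiableAt.differentiableWithinAt
      · rw [interior_Ici]
        intro v hv
        have hv0 : (0:ℝ) < v := hT.trans hv
        rw [hderiv v hv0]
        have hβv : (0:ℝ) < β * v := by positivity
        have hTβv : (0:ℝ) < T + β * v := by positivity
        have hlog : Real.log (T + β * v) - Real.log (β * v) ≤ T / (β * v) := by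
          have := Real.log_le_sub_one_of_pos (show (0:ℝ) < (T + β * v) / (β * v) by positivity)
          rw [Real.log_div hTβv.ne' hβv.ne'] at this
          have e : (T + β * v) / (β * v) - 1 = T / (β * v) := by field_simp; ring
          linarith [this, e ▸ this]
        have hdivle : T / (β * v) ≤ 1 / β := by
          rw [div_le_div_iff₀ hβv hβ]
          nlinarith [(show T < v from hv).le]
        have : C * β ^ 2 * (Real.log (T + β * v) - Real.log (β * v)) ≤ β := by
          calc C * β ^ 2 * (Real.log (T + β * v) - Real.log (β * v))
              ≤ C * β ^ 2 * (1 / β) := by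
                apply mul_le_mul_of_nonneg_left (le_trans hlog hdivle) (by positivity)
            _ = C * β := by field_simp
            _ ≤ 1 * β := by nlinarith
            _ = β := one_mul β
        nlinarith
    intro vL hvL
    rw [hEq T hT, hEq vL (lt_of_lt_of_le hT hvL)]
    exact hmono (Set.self_mem_Ici) hvL hvL
  · -- value at T
    have e1 : T / T = 1 := div_self hT.ne'
    have e2 : T / (β * T) = 1 / β := by rw [mul_comm, ← div_div, div_self hT.ne']
    simp only [h, e1, e2, Real.log_one]
    ring
end

section
/- Let g: [0,1] → ℝ≥0 be nonincreasing, define r(q) = q·g(q), and suppose q* ∈ (0,1] satisfies r(q*) = sup_{q∈[0,1]} r(q) =: M. Define r⁺(q) = sup_{t ∈ [0,q]} r(t). Then ∫_0^1 r⁺(q) dq ≥ (1 − q*/2)·M ≥ M/2. -/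
theorem sample_price_half_approx (g : ℝ → ℝ) (hg : AntitoneOn g (Set.Icc 0 1))
    (hg0 : ∀ q ∈ Set.Icc (0 : ℝ) 1, 0 ≤ g q)
    (r : ℝ → ℝ) (hr : ∀ q, r q = q * g q)
    (qs : ℝ) (hqs : qs ∈ Set.Ioc (0 : ℝ) 1)
    (hmax : ∀ q ∈ Set.Icc (0 : ℝ) 1, r q ≤ r qs)
    (rplus : ℝ → ℝ) (hrplus : ∀ q, rplus q = sSup (r '' Set.Icc 0 q)) :
    (∫ q in (0 : ℝ)..1, rplus q) ≥ (1 - qs / 2) * r qs ∧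
    (∫ q in (0 : ℝ)..1, rplus q) ≥ r qs / 2 := by
  have hqs0 : 0 < qs := hqs.1
  have hqs1 : qs ≤ 1 := hqs.2
  have hqsm : qs ∈ Set.Icc (0 : ℝ) 1 := ⟨hqs0.le, hqs1⟩
  have hM0 : 0 ≤ r qs := by rw [hr]; exact mul_nonneg hqs0.le (hg0 qs hqsm)
  have hbdd : ∀ q ∈ Set.Icc (0 : ℝ) 1, BddAbove (r '' Set.Icc 0 q) := by
    intro q hq
    refine ⟨r qs, ?_⟩
    rintro y ⟨t, ht, rfl⟩
    exact hmax t ⟨ht.1, ht.2.trans hq.2⟩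
  have hmono : MonotoneOn rplus (Set.Icc 0 1) := by
    intro a ha b hb hab
    rw [hrplus, hrplus]
    refine csSup_le_csSup (hbdd b hb) ⟨r 0, ⟨0, ⟨le_refl _, ha.1⟩, rfl⟩⟩ ?_
    exact Set.image_mono (f := r) (Set.Icc_subset_Icc_right hab)
  have hlow1 : ∀ q ∈ Set.Icc 0 qs, q * g qs ≤ rplus q := by
    intro q hq
    have hqm : q ∈ Set.Icc (0 : ℝ) 1 := ⟨hq.1, hq.2.trans hqs1⟩
    have h1 : r q ≤ rplus q := by
      rw [hrplus]
      exact le_csSup (hbdd q hqm) ⟨q, ⟨hq.1, le_refl q⟩, rfl⟩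
    refine le_trans ?_ h1
    rw [hr]
    exact mul_le_mul_of_nonneg_left (hg hqm hqsm hq.2) hq.1
  have hlow2 : ∀ q ∈ Set.Icc qs 1, r qs ≤ rplus q := by
    intro q hq
    rw [hrplus]
    exact le_csSup (hbdd q ⟨hqs0.le.trans hq.1, hq.2⟩) ⟨qs, ⟨hqs0.le, hq.1⟩, rfl⟩
  have hint1 : IntervalIntegrable rplus MeasureTheory.volume 0 qs := by
    apply MonotoneOn.intervalIntegrable
    have : Set.uIcc (0 : ℝ) qs ⊆ Set.Icc 0 1 := by
      rw [Set.uIcc_of_le hqs0.le]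
      exact Set.Icc_subset_Icc_right hqs1
    exact hmono.mono this
  have hint2 : IntervalIntegrable rplus MeasureTheory.volume qs 1 := by
    apply MonotoneOn.intervalIntegrable
    have : Set.uIcc qs (1 : ℝ) ⊆ Set.Icc 0 1 := by
      rw [Set.uIcc_of_le hqs1]
      exact Set.Icc_subset_Icc_left hqs0.le
    exact hmono.mono this
  have h1 : (∫ q in (0:ℝ)..qs, q * g qs) ≤ ∫ q in (0:ℝ)..qs, rplus q := by
    apply intervalIntegral.integral_mono_on hqs0.le ?_ hint1 hlow1
    exact (continuous_id.mul continuous_const).intervalIntegrable 0 qs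
  have h2 : (∫ _ in qs..(1:ℝ), r qs) ≤ ∫ q in qs..(1:ℝ), rplus q := by
    apply intervalIntegral.integral_mono_on hqs1 ?_ hint2 hlow2
    exact intervalIntegrable_const
  have e1 : (∫ q in (0:ℝ)..qs, q * g qs) = qs / 2 * r qs := by
    rw [intervalIntegral.integral_mul_const, integral_id, hr]
    ring
  have e2 : (∫ _ in qs..(1:ℝ), r qs) = (1 - qs) * r qs := by
    rw [intervalIntegral.integral_const]
    simp [smul_eq_mul]
  have hsplit : (∫ q in (0:ℝ)..1, rplus q)
      = (∫ q in (0:ℝ)..qs, rplus q) + ∫ q in qs..(1:ℝ), rplus q :=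
    (intervalIntegral.integral_add_adjacent_intervals hint1 hint2).symm
  have key : (∫ q in (0:ℝ)..1, rplus q) ≥ (1 - qs / 2) * r qs := by
    rw [hsplit]
    have := add_le_add h1 h2
    rw [e1, e2] at this
    nlinarith
  refine ⟨key, le_trans ?_ key⟩
  nlinarith
end
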